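/- π = 22/7 − 24·Σ_{n=2}^∞ (-1)^{n} / ((2n+1)(2n+2)(2n+3)(2n+4)(2n+5)). -/

import Mathlib

open Real Filter Finset
open scoped Topology

-- the summand of the series
private noncomputable def aSeq (n : ℕ) : ℝ :=
  (-1 : ℝ) ^ n /
    ((2 * (n : ℝ) + 5) * (2 * (n : ℝ) + 6) * (2 * (n : ℝ) + 7) * (2 * (n : ℝ) + 8) *
      (2 * (n : ℝ) + 9))

private noncomputable def uSeq (n : ℕ) : ℝ := (-1 : ℝ) ^ n / (2 * (n : ℝ) + 5)
private noncomputable def hSeq (n : ℕ) : ℝ := (-1 : ℝ) ^ n / (2 * (n : ℝ) + 6)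

private lemma aSeq_summable : Summable aSeq := by
  have hg : Summable (fun n : ℕ => 1 / ((n : ℝ) + 1) ^ 2) := by
    have := Real.summable_one_div_nat_pow.mpr (le_refl 2)
    simpa using (summable_nat_add_iff 1).mpr this
  apply Summable.of_norm
  apply Summable.of_nonneg_of_le (fun n => norm_nonneg _) _ hg
  intro n
  have h1 : (0:ℝ) < 2 * (n : ℝ) + 5 := by positivity
  have h2 : (0:ℝ) < 2 * (n : ℝ) + 6 := by positivity
  have h3 : (0:ℝ) < 2 * (n : ℝ) + 7 := by positivity
  have h4 : (0:ℝ) < 2 * (n : ℝ) + 8 := by positivity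
  have h5 : (0:ℝ) < 2 * (n : ℝ) + 9 := by positivity
  have : ‖aSeq n‖ = 1 / ((2 * (n : ℝ) + 5) * (2 * (n : ℝ) + 6) * (2 * (n : ℝ) + 7) *
      (2 * (n : ℝ) + 8) * (2 * (n : ℝ) + 9)) := by
    rw [aSeq, norm_div, norm_pow, norm_neg, norm_one, one_pow, Real.norm_eq_abs,
      abs_of_pos (by positivity)]
  rw [this]
  apply one_div_le_one_div_of_le (by positivity)
  calc ((n : ℝ) + 1) ^ 2 ≤ (2 * (n : ℝ) + 5) * (2 * (n : ℝ) + 6) := by nlinarith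
    _ ≤ (2 * (n : ℝ) + 5) * (2 * (n : ℝ) + 6) *
        ((2 * (n : ℝ) + 7) * ((2 * (n : ℝ) + 8) * (2 * (n : ℝ) + 9))) :=
      le_mul_of_one_le_right (by positivity)
        (by nlinarith [mul_pos h4 h5, mul_pos h3 (mul_pos h4 h5)])
    _ = (2 * (n : ℝ) + 5) * (2 * (n : ℝ) + 6) * (2 * (n : ℝ) + 7) * (2 * (n : ℝ) + 8) *
        (2 * (n : ℝ) + 9) := by ring

private lemma key_identity (k : ℕ) :
    ∑ i ∈ range k, 24 * aSeq i =
      -4 * ∑ i ∈ range k, uSeq i + 10 / 21 +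
        (-5 * uSeq k + uSeq (k + 1) + 4 * hSeq k) := by
  induction k with
  | zero => simp [uSeq, hSeq]; norm_num
  | succ k ih =>
    rw [Finset.sum_range_succ, Finset.sum_range_succ, ih]
    have hx : (0:ℝ) ≤ (k:ℝ) := Nat.cast_nonneg k
    simp only [aSeq, uSeq, hSeq, pow_succ]
    push_cast
    have h1 : (2 * (k : ℝ) + 5) ≠ 0 := by positivity
    have h2 : (2 * (k : ℝ) + 6) ≠ 0 := by positivity
    have h3 : (2 * (k : ℝ) + 7) ≠ 0 := by positivity
    have h4 : (2 * (k : ℝ) + 8) ≠ 0 := by positivity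
    have h5 : (2 * (k : ℝ) + 9) ≠ 0 := by positivity
    have h6 : (2 * ((k : ℝ) + 1) + 5) ≠ 0 := by positivity
    have h7 : (2 * ((k : ℝ) + 1) + 6) ≠ 0 := by positivity
    have h8 : (2 * ((k : ℝ) + 1 + 1) + 5) ≠ 0 := by positivity
    field_simp
    ring

private lemma uSeq_partial (k : ℕ) :
    ∑ i ∈ range k, uSeq i =
      (∑ i ∈ range (k + 2), (-1 : ℝ) ^ i / (2 * (i : ℝ) + 1)) - (1 - 1/3) := by
  induction k with
  | zero =>
    rw [Finset.sum_range_zero]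
    norm_num [Finset.sum_range_succ]
  | succ k ih =>
    rw [Finset.sum_range_succ (f := uSeq) (n := k), ih,
      show k + 1 + 2 = (k + 2) + 1 from rfl,
      Finset.sum_range_succ (f := fun i : ℕ => (-1 : ℝ) ^ i / (2 * (i : ℝ) + 1)) (n := k + 2)]
    have : uSeq k = (-1 : ℝ) ^ (k + 2) / (2 * ((k : ℝ) + 2) + 1) := by
      rw [uSeq, pow_succ, pow_succ]; ring
    rw [this]
    push_cast
    ring

private lemma tendsto_small (c : ℝ) (hc : 0 < c) :
    Tendsto (fun n : ℕ => (-1 : ℝ) ^ n / (2 * (n : ℝ) + c)) atTop (𝓝 0) := by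
  apply squeeze_zero_norm (a := fun n : ℕ => 1 / (2 * (n : ℝ) + c))
  · intro n
    rw [norm_div, norm_pow, norm_neg, norm_one, one_pow, Real.norm_eq_abs,
      abs_of_pos (by positivity)]
  · have hA : Tendsto (fun n : ℕ => 2 * (n : ℝ) + c) atTop atTop :=
      tendsto_atTop_add_const_right _ c (tendsto_natCast_atTop_atTop.const_mul_atTop zero_lt_two)
    simpa [Function.comp_def, one_div] using tendsto_inv_atTop_zero.comp hA

theorem pi_eq_twentytwo_sevenths_sub_series :
    π = 22 / 7 -
      24 * ∑' n : ℕ, (-1 : ℝ) ^ n /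
        ((2 * (n : ℝ) + 5) * (2 * (n : ℝ) + 6) * (2 * (n : ℝ) + 7) * (2 * (n : ℝ) + 8) *
          (2 * (n : ℝ) + 9)) := by
  have hsum : Summable aSeq := aSeq_summable
  have htsum : Tendsto (fun k => ∑ i ∈ range k, aSeq i) atTop (𝓝 (∑' n, aSeq n)) :=
    hsum.hasSum.tendsto_sum_nat
  -- limit of partial sums of uSeq
  have hL : Tendsto (fun k => ∑ i ∈ range (k + 2), (-1 : ℝ) ^ i / (2 * (i : ℝ) + 1))
      atTop (𝓝 (π / 4)) :=
    Real.tendsto_sum_pi_div_four.comp (tendsto_add_atTop_nat 2)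
  have hU : Tendsto (fun k => ∑ i ∈ range k, uSeq i) atTop (𝓝 (π / 4 - (1 - 1/3))) := by
    simp only [uSeq_partial]
    exact hL.sub_const _
  have hu0 : Tendsto (fun k : ℕ => uSeq k) atTop (𝓝 0) := tendsto_small 5 (by norm_num)
  have hu1 : Tendsto (fun k : ℕ => uSeq (k + 1)) atTop (𝓝 0) :=
    hu0.comp (tendsto_add_atTop_nat 1)
  have hh0 : Tendsto (fun k : ℕ => hSeq k) atTop (𝓝 0) := tendsto_small 6 (by norm_num)
  -- limit of partial sums of 24 * aSeq
  have h24 : Tendsto (fun k => ∑ i ∈ range k, 24 * aSeq i) atTop (𝓝 (22/7 - π)) := by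
    have := ((hU.const_mul (-4)).add_const (10/21)).add
      (((hu0.const_mul (-5)).add hu1).add (hh0.const_mul 4))
    simp only [key_identity]
    convert this using 2
    ring
  have h24' : Tendsto (fun k => ∑ i ∈ range k, 24 * aSeq i) atTop (𝓝 (24 * ∑' n, aSeq n)) := by
    have := htsum.const_mul (24 : ℝ)
    simpa [Finset.mul_sum] using this
  have heq : 24 * ∑' n, aSeq n = 22/7 - π := tendsto_nhds_unique h24' h24
  have : (∑' n : ℕ, (-1 : ℝ) ^ n /
        ((2 * (n : ℝ) + 5) * (2 * (n : ℝ) + 6) * (2 * (n : ℝ) + 7) * (2 * (n : ℝ) + 8) *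
          (2 * (n : ℝ) + 9))) = ∑' n, aSeq n := rfl
  rw [this]
  linarith
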